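/- Let ν > 0, let F ⊆ ℝ^n be a nonempty convex set, let f₁ : ℝ^n → ℝ be convex, and define Ψ(z) = f₁(z) − Σ_{i=1}^n max{0, z_i/ν − 1, −z_i/ν − 1} for z ∈ ℝ^n. Fix x ∈ F and define g ∈ ℝ^n by g_i = 0 if |x_i| < ν, g_i = 1/ν if x_i ≥ ν, and g_i = −1/ν if x_i ≤ −ν. Suppose y ∈ F minimizes z ↦ f₁(z) − gᵀz + (1/2)‖z − x‖² over F, i.e., f₁(y) − gᵀy + (1/2)‖y − x‖² ≤ f₁(z) − gᵀz + (1/2)‖z − x‖² for all z ∈ F. Then Ψ(x) ≥ Ψ(y) + (1/2)‖y − x‖². -/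

import Mathlib

open scoped BigOperators

theorem stmt_14 {n : ℕ} (ν : ℝ) (hν : 0 < ν)
    (F : Set (EuclideanSpace ℝ (Fin n))) (hFne : F.Nonempty) (hFconv : Convex ℝ F)
    (f₁ : EuclideanSpace ℝ (Fin n) → ℝ) (hf₁ : ConvexOn ℝ Set.univ f₁)
    (Ψ : EuclideanSpace ℝ (Fin n) → ℝ)
    (hΨ : ∀ z, Ψ z = f₁ z - ∑ i, max 0 (max (z i / ν - 1) (-(z i) / ν - 1)))
    (x : EuclideanSpace ℝ (Fin n)) (hxF : x ∈ F)
    (g : Fin n → ℝ)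
    (hg1 : ∀ i, |x i| < ν → g i = 0)
    (hg2 : ∀ i, ν ≤ x i → g i = 1 / ν)
    (hg3 : ∀ i, x i ≤ -ν → g i = -(1 / ν))
    (y : EuclideanSpace ℝ (Fin n)) (hyF : y ∈ F)
    (hymin : ∀ z ∈ F, f₁ y - ∑ i, g i * y i + (1 / 2) * ‖y - x‖ ^ 2
      ≤ f₁ z - ∑ i, g i * z i + (1 / 2) * ‖z - x‖ ^ 2) :
    Ψ y + (1 / 2) * ‖y - x‖ ^ 2 ≤ Ψ x := by
  have key : ∀ i, max 0 (max (x i / ν - 1) (-(x i) / ν - 1)) + g i * (y i - x i)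
      ≤ max 0 (max (y i / ν - 1) (-(y i) / ν - 1)) := by
    intro i
    rcases lt_or_ge (|x i|) ν with h | h
    · have hx1 : x i / ν - 1 ≤ 0 := by
        rw [sub_nonpos, div_le_one hν]; exact le_of_lt ((abs_lt.mp h).2)
      have hx2 : -(x i) / ν - 1 ≤ 0 := by
        rw [sub_nonpos, div_le_one hν]; linarith [(abs_lt.mp h).1]
      rw [hg1 i h, max_eq_left (max_le hx1 hx2)]
      simpa using le_max_left (0:ℝ) (max (y i / ν - 1) (-(y i) / ν - 1))
    · rcases le_abs.mp h with h | h
      · have hx0 : 0 ≤ x i / ν - 1 := by rw [sub_nonneg, le_div_iff₀ hν]; linarith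
        have hxm : -(x i) / ν - 1 ≤ x i / ν - 1 := by
          have : -(x i) / ν ≤ x i / ν := by
            exact div_le_div_of_nonneg_right (by linarith) hν.le
          linarith
        rw [hg2 i h, max_eq_right (le_max_of_le_left hx0), max_eq_left hxm]
        have hy : y i / ν - 1 ≤ max 0 (max (y i / ν - 1) (-(y i) / ν - 1)) :=
          le_trans (le_max_left _ _) (le_max_right _ _)
        have heq : x i / ν - 1 + 1 / ν * (y i - x i) = y i / ν - 1 := by
          field_simp; ring
        linarith
      · have h' : x i ≤ -ν := by linarith
        have hx0 : 0 ≤ -(x i) / ν - 1 := by rw [sub_nonneg, le_div_iff₀ hν]; linarith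
        have hxm : x i / ν - 1 ≤ -(x i) / ν - 1 := by
          have : x i / ν ≤ -(x i) / ν := by
            exact div_le_div_of_nonneg_right (by linarith) hν.le
          linarith
        rw [hg3 i h', max_eq_right (le_max_of_le_right hx0), max_eq_right hxm]
        have hy : -(y i) / ν - 1 ≤ max 0 (max (y i / ν - 1) (-(y i) / ν - 1)) :=
          le_trans (le_max_right _ _) (le_max_right _ _)
        have heq : -(x i) / ν - 1 + -(1 / ν) * (y i - x i) = -(y i) / ν - 1 := by
          field_simp; ring
        linarith
  have hsum : ∑ i, max 0 (max (x i / ν - 1) (-(x i) / ν - 1))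
      + ∑ i, g i * (y i - x i)
      ≤ ∑ i, max 0 (max (y i / ν - 1) (-(y i) / ν - 1)) := by
    rw [← Finset.sum_add_distrib]
    exact Finset.sum_le_sum fun i _ => key i
  have hgsplit : ∑ i, g i * (y i - x i) = (∑ i, g i * y i) - ∑ i, g i * x i := by
    rw [← Finset.sum_sub_distrib]
    exact Finset.sum_congr rfl fun i _ => by ring
  have hmin := hymin x hxF
  rw [sub_self, norm_zero] at hmin
  rw [hΨ x, hΨ y]
  rw [hgsplit] at hsum
  linarith
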